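/- Let N be a Poisson(μ) random variable with μ ≥ 0; let X₁, X₂, … be i.i.d. real-valued random variables with common law ν (a probability measure on ℝ); let g₁, g₂ and h_{1,1}, h_{1,2}, h_{2,1}, h_{2,2}, … be i.i.d. random variables with the exponential distribution of rate 1; assume N, (X_k), (h_{k,1}), (h_{k,2}), g₁, g₂ are all mutually independent; let θ₁, θ₂ ≥ 0 and let c₁, c₂ : ℝ → [0,∞) be measurable. Then P(g₁ ≥ θ₁·Σ_{k=1}^{N} c₁(X_k)·h_{k,1} and g₂ ≥ θ₂·Σ_{k=1}^{N} c₂(X_k)·h_{k,2}) = exp(−μ·∫_ℝ (1 − 1/((1 + θ₁·c₁(x))·(1 + θ₂·c₂(x)))) dν(x)), where empty sums (when N = 0) equal 0. -/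

import Mathlib

open MeasureTheory ProbabilityTheory

/-- Index type collecting the common interferer locations `X k`, the per-link interferer
fading gains `H1 k`, `H2 k`, the desired-signal fading gains `G1`, `G2`, and the number of
interferers `N`. -/
inductive MixIdx₂ where
  | X (k : ℕ)
  | H1 (k : ℕ)
  | H2 (k : ℕ)
  | G1
  | G2
  | N

/-- The codomain of each random variable in the family indexed by `MixIdx₂`. -/
def MixIdx₂.type : MixIdx₂ → Type
  | .X _ => ℝ
  | .H1 _ => ℝ
  | .H2 _ => ℝ
  | .G1 => ℝ
  | .G2 => ℝ
  | .N => ℕ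

instance (i : MixIdx₂) : MeasurableSpace i.type := by
  cases i <;> (dsimp [MixIdx₂.type]; infer_instance)

/-- The family of random variables `(X k)`, `(h₁ k)`, `(h₂ k)`, `g₁`, `g₂`, `N` indexed by
`MixIdx₂`. -/
def mixFam₂ {Ω : Type*} (N : Ω → ℕ) (X h₁ h₂ : ℕ → Ω → ℝ) (g₁ g₂ : Ω → ℝ) :
    ∀ i : MixIdx₂, Ω → i.type
  | .X k => X k
  | .H1 k => h₁ k
  | .H2 k => h₂ k
  | .G1 => g₁
  | .G2 => g₂
  | .N => N

open Real Set
open scoped ENNReal NNReal Nat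

deriving instance DecidableEq for MixIdx₂


lemma aux_expMeasure_Ici (s : ℝ) :
    expMeasure 1 {y | s ≤ y} = ENNReal.ofReal (Real.exp (-(max s 0))) := by
  have hset : {y | s ≤ y} = Ici s := rfl
  have hPM : IsProbabilityMeasure (expMeasure 1) := isProbabilityMeasure_expMeasure one_pos
  rcases le_or_gt s 0 with hs | hs
  · have h0 : expMeasure 1 (Iio s) = 0 := by
      rw [expMeasure, gammaMeasure, withDensity_apply _ measurableSet_Iio]
      exact lintegral_exponentialPDF_of_nonpos hs
    have hc := measure_compl (μ := expMeasure 1) (s := Iio s) measurableSet_Iio (measure_ne_top _ _)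
    rw [compl_Iio, h0, measure_univ, tsub_zero] at hc
    rw [hset, hc, max_eq_right hs, neg_zero, Real.exp_zero, ENNReal.ofReal_one]
  · have hInt : IntegrableOn (fun x : ℝ => Real.exp (-x)) (Ici s) := by
      have := exp_neg_integrableOn_Ioi s (b := 1) one_pos
      simp only [neg_mul, one_mul] at this
      exact this.congr_set_ae Ioi_ae_eq_Ici.symm
    rw [hset, expMeasure, gammaMeasure, withDensity_apply _ measurableSet_Ici]
    have hcong : ∫⁻ x in Ici s, gammaPDF 1 1 x
        = ∫⁻ x in Ici s, ENNReal.ofReal (Real.exp (-x)) := by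
      refine setLIntegral_congr_fun measurableSet_Ici ?_
      intro x hx
      rw [show gammaPDF 1 1 x = exponentialPDF 1 x from rfl,
        exponentialPDF_of_nonneg (le_trans hs.le hx), one_mul, one_mul]
    rw [hcong, ← ofReal_integral_eq_lintegral_ofReal hInt
      (Filter.Eventually.of_forall fun x => (Real.exp_pos _).le)]
    rw [integral_Ici_eq_integral_Ioi, integral_exp_neg_Ioi, max_eq_left hs.le]

lemma aux_exp_laplace {a : ℝ} (ha : 0 ≤ a) :
    ∫⁻ u, ENNReal.ofReal (Real.exp (-(a * max u 0))) ∂(expMeasure 1)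
      = ENNReal.ofReal (1 / (1 + a)) := by
  have hmeas : Measurable fun u : ℝ => ENNReal.ofReal (Real.exp (-(a * max u 0))) := by
    fun_prop
  rw [expMeasure, gammaMeasure,
    lintegral_withDensity_eq_lintegral_mul _ (show Measurable (gammaPDF 1 1) from (measurable_gammaPDFReal 1 1).ennreal_ofReal) hmeas]
  have hsplit := (lintegral_add_compl
    (f := fun u => (gammaPDF 1 1 * fun u => ENNReal.ofReal (Real.exp (-(a * max u 0)))) u)
    (μ := volume) (measurableSet_Ici (a := (0:ℝ))))
  rw [compl_Ici] at hsplit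
  have hzero : ∫⁻ u in Iio (0:ℝ),
      (gammaPDF 1 1 * fun u => ENNReal.ofReal (Real.exp (-(a * max u 0)))) u = 0 := by
    rw [← lintegral_zero (μ := (volume : Measure ℝ).restrict (Iio 0))]
    refine setLIntegral_congr_fun measurableSet_Iio ?_
    intro x hx
    have : gammaPDF 1 1 x = 0 := gammaPDF_of_neg hx
    simp [this]
  have hmain : ∫⁻ u in Ici (0:ℝ),
      (gammaPDF 1 1 * fun u => ENNReal.ofReal (Real.exp (-(a * max u 0)))) u
      = ENNReal.ofReal (1 / (1 + a)) := by
    have hcong : ∀ x ∈ Ici (0:ℝ),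
        (gammaPDF 1 1 * fun u => ENNReal.ofReal (Real.exp (-(a * max u 0)))) x
        = ENNReal.ofReal (Real.exp (-((1 + a) * x))) := by
      intro x hx
      have hx0 : (0:ℝ) ≤ x := hx
      have hpdf : gammaPDF 1 1 x = ENNReal.ofReal (Real.exp (-x)) := by
        rw [gammaPDF, gammaPDFReal]
        simp [if_pos hx0, Real.Gamma_one, Real.rpow_one]
      simp only [Pi.mul_apply, hpdf, max_eq_left hx0]
      rw [← ENNReal.ofReal_mul (Real.exp_pos _).le, ← Real.exp_add]
      ring_nf
    rw [setLIntegral_congr_fun measurableSet_Ici hcong]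
    have hInt : IntegrableOn (fun x : ℝ => Real.exp (-((1 + a) * x))) (Ici 0) := by
      have := exp_neg_integrableOn_Ioi 0 (b := 1 + a) (by linarith)
      simp only [neg_mul] at this ⊢
      exact this.congr_set_ae Ioi_ae_eq_Ici.symm
    rw [← ofReal_integral_eq_lintegral_ofReal hInt
      (Filter.Eventually.of_forall fun x => (Real.exp_pos _).le)]
    congr 1
    rw [integral_Ici_eq_integral_Ioi]
    have h1a : (0:ℝ) < 1 + a := by linarith
    have := integral_rpow_mul_exp_neg_mul_Ioi (a := 1) one_pos h1a
    simp only [sub_self, Real.rpow_zero, one_mul, Real.rpow_one, Real.Gamma_one, mul_one] at this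
    rw [this]
  calc ∫⁻ u, (gammaPDF 1 1 * fun u => ENNReal.ofReal (Real.exp (-(a * max u 0)))) u
      = _ := hsplit.symm
    _ = ENNReal.ofReal (1 / (1 + a)) := by rw [hzero, hmain, add_zero]

lemma aux_one_le_denom {θ : ℝ} (hθ : 0 ≤ θ) {c : ℝ} (hc : 0 ≤ c) : (1:ℝ) ≤ 1 + θ * c := by
  nlinarith


lemma aux_f_int (θ₁ θ₂ : ℝ) (hθ₁ : 0 ≤ θ₁) (hθ₂ : 0 ≤ θ₂)
    {c₁ c₂ : ℝ → ℝ} (hc₁ : Measurable c₁) (hc₂ : Measurable c₂)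
    (hc₁0 : ∀ x, 0 ≤ c₁ x) (hc₂0 : ∀ x, 0 ≤ c₂ x)
    (ν : Measure ℝ) [IsProbabilityMeasure ν] :
    Integrable (fun x => 1 / ((1 + θ₁ * c₁ x) * (1 + θ₂ * c₂ x))) ν := by
  have h1 : ∀ x, (1:ℝ) ≤ 1 + θ₁ * c₁ x := fun x => aux_one_le_denom hθ₁ (hc₁0 x)
  have h2 : ∀ x, (1:ℝ) ≤ 1 + θ₂ * c₂ x := fun x => aux_one_le_denom hθ₂ (hc₂0 x)
  have hfm : Measurable fun x => 1 / ((1 + θ₁ * c₁ x) * (1 + θ₂ * c₂ x)) := by fun_prop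
  refine (integrable_const (1:ℝ)).mono' hfm.aestronglyMeasurable
    (Filter.Eventually.of_forall fun x => ?_)
  have hd : (1:ℝ) ≤ (1 + θ₁ * c₁ x) * (1 + θ₂ * c₂ x) := by nlinarith [h1 x, h2 x]
  have hd0 : (0:ℝ) < (1 + θ₁ * c₁ x) * (1 + θ₂ * c₂ x) := lt_of_lt_of_le one_pos hd
  rw [Real.norm_eq_abs, abs_of_nonneg (le_of_lt (div_pos one_pos hd0)), div_le_one hd0]
  linarith

lemma aux_triple (θ₁ θ₂ : ℝ) (hθ₁ : 0 ≤ θ₁) (hθ₂ : 0 ≤ θ₂)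
    (c₁ c₂ : ℝ → ℝ) (hc₁ : Measurable c₁) (hc₂ : Measurable c₂)
    (hc₁0 : ∀ x, 0 ≤ c₁ x) (hc₂0 : ∀ x, 0 ≤ c₂ x)
    (ν : Measure ℝ) [IsProbabilityMeasure ν] :
    ∫⁻ p : (ℝ × ℝ) × ℝ,
        ENNReal.ofReal (Real.exp (-(θ₁ * c₁ p.1.1 * max p.1.2 0))) *
          ENNReal.ofReal (Real.exp (-(θ₂ * c₂ p.1.1 * max p.2 0)))
        ∂((ν.prod (expMeasure 1)).prod (expMeasure 1))
      = ENNReal.ofReal (∫ x, 1 / ((1 + θ₁ * c₁ x) * (1 + θ₂ * c₂ x)) ∂ν) := by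
  haveI : IsProbabilityMeasure (expMeasure 1) := isProbabilityMeasure_expMeasure one_pos
  have hmeasΨ : Measurable fun p : (ℝ × ℝ) × ℝ =>
      ENNReal.ofReal (Real.exp (-(θ₁ * c₁ p.1.1 * max p.1.2 0))) *
        ENNReal.ofReal (Real.exp (-(θ₂ * c₂ p.1.1 * max p.2 0))) := by fun_prop
  rw [lintegral_prod _ hmeasΨ.aemeasurable]
  have hstep1 : ∀ q : ℝ × ℝ,
      ∫⁻ v, ENNReal.ofReal (Real.exp (-(θ₁ * c₁ q.1 * max q.2 0))) *
          ENNReal.ofReal (Real.exp (-(θ₂ * c₂ q.1 * max v 0))) ∂(expMeasure 1)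
        = ENNReal.ofReal (Real.exp (-(θ₁ * c₁ q.1 * max q.2 0))) *
            ENNReal.ofReal (1 / (1 + θ₂ * c₂ q.1)) := by
    intro q
    rw [lintegral_const_mul _ (by fun_prop),
      aux_exp_laplace (mul_nonneg hθ₂ (hc₂0 _))]
  simp_rw [hstep1]
  rw [lintegral_prod _ (by fun_prop)]
  have hstep2 : ∀ x : ℝ,
      ∫⁻ u, ENNReal.ofReal (Real.exp (-(θ₁ * c₁ x * max u 0))) *
          ENNReal.ofReal (1 / (1 + θ₂ * c₂ x)) ∂(expMeasure 1)
        = ENNReal.ofReal (1 / ((1 + θ₁ * c₁ x) * (1 + θ₂ * c₂ x))) := by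
    intro x
    rw [lintegral_mul_const _ (by fun_prop),
      aux_exp_laplace (mul_nonneg hθ₁ (hc₁0 _)),
      ← ENNReal.ofReal_mul (le_of_lt (div_pos one_pos
        (lt_of_lt_of_le one_pos (aux_one_le_denom hθ₁ (hc₁0 x))))),
      div_mul_div_comm, one_mul]
  simp_rw [hstep2]
  have h1 : ∀ x, (1:ℝ) ≤ 1 + θ₁ * c₁ x := fun x => aux_one_le_denom hθ₁ (hc₁0 x)
  have h2 : ∀ x, (1:ℝ) ≤ 1 + θ₂ * c₂ x := fun x => aux_one_le_denom hθ₂ (hc₂0 x)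
  have hfm : Measurable fun x => 1 / ((1 + θ₁ * c₁ x) * (1 + θ₂ * c₂ x)) := by fun_prop
  have hint : Integrable (fun x => 1 / ((1 + θ₁ * c₁ x) * (1 + θ₂ * c₂ x))) ν :=
    aux_f_int θ₁ θ₂ hθ₁ hθ₂ hc₁ hc₂ hc₁0 hc₂0 ν
  rw [← ofReal_integral_eq_lintegral_ofReal hint
    (Filter.Eventually.of_forall fun x => le_of_lt (div_pos one_pos
      (lt_of_lt_of_le one_pos (by nlinarith [h1 x, h2 x]))))]


def tripleSet (n : ℕ) : Finset MixIdx₂ :=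
  ((Finset.range n).image MixIdx₂.X ∪ (Finset.range n).image MixIdx₂.H1)
    ∪ (Finset.range n).image MixIdx₂.H2

@[simp] lemma X_mem_tripleSet {k n : ℕ} : MixIdx₂.X k ∈ tripleSet n ↔ k < n := by
  simp [tripleSet]

@[simp] lemma H1_mem_tripleSet {k n : ℕ} : MixIdx₂.H1 k ∈ tripleSet n ↔ k < n := by
  simp [tripleSet]

@[simp] lemma H2_mem_tripleSet {k n : ℕ} : MixIdx₂.H2 k ∈ tripleSet n ↔ k < n := by
  simp [tripleSet]

@[simp] lemma G1_not_mem_tripleSet {n : ℕ} : MixIdx₂.G1 ∉ tripleSet n := by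
  simp [tripleSet]

@[simp] lemma G2_not_mem_tripleSet {n : ℕ} : MixIdx₂.G2 ∉ tripleSet n := by
  simp [tripleSet]

@[simp] lemma N_not_mem_tripleSet {n : ℕ} : MixIdx₂.N ∉ tripleSet n := by
  simp [tripleSet]

/-- indices of the `n`-th triple -/
def tripleSet1 (n : ℕ) : Finset MixIdx₂ := {MixIdx₂.X n, MixIdx₂.H1 n, MixIdx₂.H2 n}

lemma disj_triple1 (n : ℕ) : Disjoint (tripleSet n) (tripleSet1 n) := by
  rw [Finset.disjoint_right]
  intro a ha
  simp only [tripleSet1, Finset.mem_insert, Finset.mem_singleton] at ha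
  rcases ha with h | h | h <;> subst h <;> simp

def gSet : Finset MixIdx₂ := {MixIdx₂.G1, MixIdx₂.G2}

lemma disj_g (n : ℕ) : Disjoint (tripleSet n) gSet := by
  rw [Finset.disjoint_right]
  intro a ha
  simp only [gSet, Finset.mem_insert, Finset.mem_singleton] at ha
  rcases ha with h | h <;> subst h <;> simp

def bigSet (n : ℕ) : Finset MixIdx₂ := tripleSet n ∪ gSet

lemma disj_N (n : ℕ) : Disjoint ({MixIdx₂.N} : Finset MixIdx₂) (bigSet n) := by
  rw [Finset.disjoint_left]
  intro a ha
  simp only [Finset.mem_singleton] at ha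
  subst ha
  simp [bigSet, gSet]

@[simp] lemma X_mem_bigSet {k n : ℕ} : MixIdx₂.X k ∈ bigSet n ↔ k < n := by
  simp [bigSet, gSet]
@[simp] lemma H1_mem_bigSet {k n : ℕ} : MixIdx₂.H1 k ∈ bigSet n ↔ k < n := by
  simp [bigSet, gSet]
@[simp] lemma G1_mem_bigSet {n : ℕ} : MixIdx₂.G1 ∈ bigSet n := by simp [bigSet, gSet]
@[simp] lemma G2_mem_bigSet {n : ℕ} : MixIdx₂.G2 ∈ bigSet n := by simp [bigSet, gSet]
/-- A default element of each coordinate type. -/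
def MixIdx₂.dflt : ∀ j : MixIdx₂, j.type
  | .X _ => (0 : ℝ)
  | .H1 _ => (0 : ℝ)
  | .H2 _ => (0 : ℝ)
  | .G1 => (0 : ℝ)
  | .G2 => (0 : ℝ)
  | .N => (0 : ℕ)

/-- Total accessor for a dependent tuple indexed by a finset of `MixIdx₂`. -/
def acc (S : Finset MixIdx₂) (v : ∀ i : S, (i : MixIdx₂).type) (j : MixIdx₂) : j.type :=
  if h : j ∈ S then v ⟨j, h⟩ else MixIdx₂.dflt j

lemma measurable_acc (S : Finset MixIdx₂) (j : MixIdx₂) :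
    Measurable (fun v : ∀ i : S, (i : MixIdx₂).type => acc S v j) := by
  by_cases h : j ∈ S
  · simp only [acc, dif_pos h]
    exact measurable_pi_apply _
  · simp only [acc, dif_neg h]
    exact measurable_const

lemma acc_tuple {Ω : Type*} (F : ∀ i : MixIdx₂, Ω → i.type) (S : Finset MixIdx₂)
    {j : MixIdx₂} (h : j ∈ S) (ω : Ω) :
    acc S (fun i : S => F i ω) j = F j ω := by
  unfold acc
  rw [dif_pos h]

/-- Real-valued total accessor. -/
def accR (S : Finset MixIdx₂) (v : ∀ i : S, (i : MixIdx₂).type) : MixIdx₂ → ℝ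
  | .X k => acc S v (.X k)
  | .H1 k => acc S v (.H1 k)
  | .H2 k => acc S v (.H2 k)
  | .G1 => acc S v .G1
  | .G2 => acc S v .G2
  | .N => 0

lemma measurable_accR (S : Finset MixIdx₂) (j : MixIdx₂) :
    Measurable (fun v : ∀ i : S, (i : MixIdx₂).type => accR S v j) := by
  cases j
  · exact measurable_acc S _
  · exact measurable_acc S _
  · exact measurable_acc S _
  · exact measurable_acc S _
  · exact measurable_acc S _
  · exact measurable_const

lemma accR_X {Ω : Type*} (F : ∀ i : MixIdx₂, Ω → i.type) (S : Finset MixIdx₂)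
    {k : ℕ} (h : MixIdx₂.X k ∈ S) (ω : Ω) :
    accR S (fun i : S => F i ω) (MixIdx₂.X k) = F (MixIdx₂.X k) ω := acc_tuple F S h ω

lemma accR_H1 {Ω : Type*} (F : ∀ i : MixIdx₂, Ω → i.type) (S : Finset MixIdx₂)
    {k : ℕ} (h : MixIdx₂.H1 k ∈ S) (ω : Ω) :
    accR S (fun i : S => F i ω) (MixIdx₂.H1 k) = F (MixIdx₂.H1 k) ω := acc_tuple F S h ω

lemma accR_H2 {Ω : Type*} (F : ∀ i : MixIdx₂, Ω → i.type) (S : Finset MixIdx₂)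
    {k : ℕ} (h : MixIdx₂.H2 k ∈ S) (ω : Ω) :
    accR S (fun i : S => F i ω) (MixIdx₂.H2 k) = F (MixIdx₂.H2 k) ω := acc_tuple F S h ω

lemma accR_G1 {Ω : Type*} (F : ∀ i : MixIdx₂, Ω → i.type) (S : Finset MixIdx₂)
    (h : MixIdx₂.G1 ∈ S) (ω : Ω) :
    accR S (fun i : S => F i ω) MixIdx₂.G1 = F MixIdx₂.G1 ω := acc_tuple F S h ω

lemma accR_G2 {Ω : Type*} (F : ∀ i : MixIdx₂, Ω → i.type) (S : Finset MixIdx₂)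
    (h : MixIdx₂.G2 ∈ S) (ω : Ω) :
    accR S (fun i : S => F i ω) MixIdx₂.G2 = F MixIdx₂.G2 ω := acc_tuple F S h ω


/-- test of basic pieces -/
noncomputable def psiFun (θ₁ θ₂ : ℝ) (c₁ c₂ : ℝ → ℝ) : (ℝ × ℝ) × ℝ → ℝ≥0∞ := fun p =>
  ENNReal.ofReal (Real.exp (-(θ₁ * c₁ p.1.1 * max p.1.2 0))) *
    ENNReal.ofReal (Real.exp (-(θ₂ * c₂ p.1.1 * max p.2 0)))

def sumFun {Ω : Type*} (θ : ℝ) (c : ℝ → ℝ) (X h : ℕ → Ω → ℝ) (n : ℕ) (ω : Ω) : ℝ :=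
  θ * ∑ k ∈ Finset.range n, c (X k ω) * h k ω

lemma psiFun_meas (θ₁ θ₂ : ℝ) {c₁ c₂ : ℝ → ℝ} (hc₁ : Measurable c₁) (hc₂ : Measurable c₂) :
    Measurable (psiFun θ₁ θ₂ c₁ c₂) := by
  unfold psiFun; fun_prop

lemma sumFun_meas {Ω : Type*} [MeasurableSpace Ω] (θ : ℝ) {c : ℝ → ℝ} (hc : Measurable c)
    {X h : ℕ → Ω → ℝ} (hX : ∀ k, Measurable (X k)) (hh : ∀ k, Measurable (h k)) (n : ℕ) :
    Measurable (sumFun θ c X h n) := by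
  unfold sumFun
  exact (Finset.measurable_sum _ fun k _ => ((hc.comp (hX k)).mul (hh k))).const_mul θ

@[simp] lemma H2_mem_bigSet {k n : ℕ} : MixIdx₂.H2 k ∈ bigSet n ↔ k < n := by
  simp [bigSet, gSet]


/-- If `N` is Poisson(`μ`), the `X k` are i.i.d. with common law `ν`, `g₁`, `g₂` and the
`h₁ k`, `h₂ k` are i.i.d. exponential with rate 1, all mutually independent, `θ₁, θ₂ ≥ 0`
and `c₁, c₂ : ℝ → [0,∞)` are measurable, then
`P(g₁ ≥ θ₁ Σ_{k<N} c₁ (X k) h₁ k ∧ g₂ ≥ θ₂ Σ_{k<N} c₂ (X k) h₂ k)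
  = exp (-μ ∫ (1 - 1/((1 + θ₁ c₁ x)(1 + θ₂ c₂ x))) dν(x))`. -/
theorem stmt_10 {Ω : Type*} [MeasurableSpace Ω] (P : Measure Ω) [IsProbabilityMeasure P]
    (μ : ℝ) (hμ : 0 ≤ μ) (ν : Measure ℝ) [IsProbabilityMeasure ν]
    (N : Ω → ℕ) (X h₁ h₂ : ℕ → Ω → ℝ) (g₁ g₂ : Ω → ℝ)
    (hN : Measurable N) (hX : ∀ k, Measurable (X k))
    (hh₁ : ∀ k, Measurable (h₁ k)) (hh₂ : ∀ k, Measurable (h₂ k))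
    (hg₁ : Measurable g₁) (hg₂ : Measurable g₂)
    (hNlaw : Measure.map N P = poissonMeasure μ.toNNReal)
    (hXlaw : ∀ k, Measure.map (X k) P = ν)
    (hh₁law : ∀ k, Measure.map (h₁ k) P = expMeasure 1)
    (hh₂law : ∀ k, Measure.map (h₂ k) P = expMeasure 1)
    (hg₁law : Measure.map g₁ P = expMeasure 1)
    (hg₂law : Measure.map g₂ P = expMeasure 1)
    (hindep : iIndepFun (mixFam₂ N X h₁ h₂ g₁ g₂) P)
    (θ₁ θ₂ : ℝ) (hθ₁ : 0 ≤ θ₁) (hθ₂ : 0 ≤ θ₂)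
    (c₁ c₂ : ℝ → ℝ) (hc₁ : Measurable c₁) (hc₂ : Measurable c₂)
    (hc₁0 : ∀ x, 0 ≤ c₁ x) (hc₂0 : ∀ x, 0 ≤ c₂ x) :
    P {ω | θ₁ * ∑ k ∈ Finset.range (N ω), c₁ (X k ω) * h₁ k ω ≤ g₁ ω ∧
           θ₂ * ∑ k ∈ Finset.range (N ω), c₂ (X k ω) * h₂ k ω ≤ g₂ ω} =
      ENNReal.ofReal (Real.exp
        (-(μ * ∫ x, (1 - 1 / ((1 + θ₁ * c₁ x) * (1 + θ₂ * c₂ x))) ∂ν))) := by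
  classical
  haveI : IsProbabilityMeasure (expMeasure 1) := isProbabilityMeasure_expMeasure one_pos
  have hFm : ∀ i, Measurable (mixFam₂ N X h₁ h₂ g₁ g₂ i) := by
    intro i; cases i
    exacts [hX _, hh₁ _, hh₂ _, hg₁, hg₂, hN]
  set Ψ := psiFun θ₁ θ₂ c₁ c₂ with hΨdef
  have hΨm : Measurable Ψ := psiFun_meas θ₁ θ₂ hc₁ hc₂
  set S₁ := sumFun θ₁ c₁ X h₁ with hS₁def
  set S₂ := sumFun θ₂ c₂ X h₂ with hS₂def
  have hS₁m : ∀ n, Measurable (S₁ n) := fun n => sumFun_meas θ₁ hc₁ hX hh₁ n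
  have hS₂m : ∀ n, Measurable (S₂ n) := fun n => sumFun_meas θ₂ hc₂ hX hh₂ n
  set A : ℕ → Set Ω := fun n => {ω | S₁ n ω ≤ g₁ ω ∧ S₂ n ω ≤ g₂ ω} with hAdef
  have hAm : ∀ n, MeasurableSet (A n) := fun n =>
    (measurableSet_le (hS₁m n) hg₁).inter (measurableSet_le (hS₂m n) hg₂)
  set t : ℕ → Ω → (ℝ × ℝ) × ℝ := fun k ω => ((X k ω, h₁ k ω), h₂ k ω) with htdef
  have htm : ∀ k, Measurable (t k) := fun k => ((hX k).prodMk (hh₁ k)).prodMk (hh₂ k)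
  set Ival : ℝ := ∫ x, 1 / ((1 + θ₁ * c₁ x) * (1 + θ₂ * c₂ x)) ∂ν with hIdef
  have hI0 : 0 ≤ Ival := integral_nonneg fun x => div_nonneg zero_le_one
    (mul_nonneg (le_trans zero_le_one (aux_one_le_denom hθ₁ (hc₁0 x)))
      (le_trans zero_le_one (aux_one_le_denom hθ₂ (hc₂0 x))))
  -- law of the k-th triple
  have hmapt : ∀ k, Measure.map (t k) P = ((ν.prod (expMeasure 1)).prod (expMeasure 1)) := by
    intro k
    have h1 : IndepFun (X k) (h₁ k) P :=
      hindep.indepFun (i := MixIdx₂.X k) (j := MixIdx₂.H1 k) (by simp)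
    have hmap1 : Measure.map (fun ω => (X k ω, h₁ k ω)) P = ν.prod (expMeasure 1) := by
      rw [(indepFun_iff_map_prod_eq_prod_map_map (hX k).aemeasurable
        (hh₁ k).aemeasurable).mp h1, hXlaw k, hh₁law k]
    have hd : Disjoint ({MixIdx₂.X k, MixIdx₂.H1 k} : Finset MixIdx₂) {MixIdx₂.H2 k} := by
      simp [Finset.disjoint_left]
    have base := hindep.indepFun_finset {MixIdx₂.X k, MixIdx₂.H1 k} {MixIdx₂.H2 k} hd hFm
    have hgl : Measurable (fun v : (∀ i : ({MixIdx₂.X k, MixIdx₂.H1 k} : Finset MixIdx₂),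
        (i : MixIdx₂).type) => ((v ⟨MixIdx₂.X k, by simp⟩ : ℝ), (v ⟨MixIdx₂.H1 k, by simp⟩ : ℝ))) :=
      (measurable_pi_apply _).prodMk (measurable_pi_apply _)
    have hgr : Measurable (fun v : (∀ i : ({MixIdx₂.H2 k} : Finset MixIdx₂),
        (i : MixIdx₂).type) => (v ⟨MixIdx₂.H2 k, by simp⟩ : ℝ)) := measurable_pi_apply _
    have h2 : IndepFun (fun ω => (X k ω, h₁ k ω)) (h₂ k) P := base.comp hgl hgr
    have hpair : Measurable fun ω => (X k ω, h₁ k ω) := (hX k).prodMk (hh₁ k)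
    rw [htdef]
    rw [(indepFun_iff_map_prod_eq_prod_map_map hpair.aemeasurable
      (hh₂ k).aemeasurable).mp h2, hmap1, hh₂law k]
  have hJ : ∀ k, ∫⁻ ω, Ψ (t k ω) ∂P = ENNReal.ofReal Ival := by
    intro k
    rw [← lintegral_map hΨm (htm k), hmapt k, hΨdef, hIdef]
    exact aux_triple θ₁ θ₂ hθ₁ hθ₂ c₁ c₂ hc₁ hc₂ hc₁0 hc₂0 ν
  -- product over range n
  have hQ : ∀ n, ∫⁻ ω, ∏ k ∈ Finset.range n, Ψ (t k ω) ∂P = (ENNReal.ofReal Ival) ^ n := by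
    intro n
    induction n with
    | zero => simp
    | succ n ih =>
      have hgl : Measurable (fun v : (∀ i : (tripleSet n : Finset MixIdx₂), (i : MixIdx₂).type) =>
          ∏ k ∈ Finset.range n,
            Ψ ((accR (tripleSet n) v (MixIdx₂.X k),
                accR (tripleSet n) v (MixIdx₂.H1 k)),
                accR (tripleSet n) v (MixIdx₂.H2 k))) := by
        refine Finset.measurable_prod _ fun k _ => ?_
        exact hΨm.comp (((measurable_accR _ _).prodMk
          (measurable_accR _ _)).prodMk (measurable_accR _ _))
      have hgr : Measurable (fun v : (∀ i : (tripleSet1 n : Finset MixIdx₂), (i : MixIdx₂).type) =>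
          Ψ (((v ⟨MixIdx₂.X n, by simp [tripleSet1]⟩ : ℝ),
              (v ⟨MixIdx₂.H1 n, by simp [tripleSet1]⟩ : ℝ)),
              (v ⟨MixIdx₂.H2 n, by simp [tripleSet1]⟩ : ℝ))) :=
        hΨm.comp (((measurable_pi_apply _).prodMk
          (measurable_pi_apply _)).prodMk (measurable_pi_apply _))
      have base := (hindep.indepFun_finset (tripleSet n) (tripleSet1 n) (disj_triple1 n) hFm).comp
        hgl hgr
      have hleq : ((fun v : (∀ i : (tripleSet n : Finset MixIdx₂), (i : MixIdx₂).type) =>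
          ∏ k ∈ Finset.range n,
            Ψ ((accR (tripleSet n) v (MixIdx₂.X k),
                accR (tripleSet n) v (MixIdx₂.H1 k)),
                accR (tripleSet n) v (MixIdx₂.H2 k))) ∘
          (fun ω (i : (tripleSet n : Finset MixIdx₂)) => mixFam₂ N X h₁ h₂ g₁ g₂ i ω))
          = fun ω => ∏ k ∈ Finset.range n, Ψ (t k ω) := by
        funext ω
        simp only [Function.comp_apply]
        refine Finset.prod_congr rfl fun k hk => ?_
        rw [accR_X _ _ (X_mem_tripleSet.mpr (Finset.mem_range.mp hk)) ω,
          accR_H1 _ _ (H1_mem_tripleSet.mpr (Finset.mem_range.mp hk)) ω,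
          accR_H2 _ _ (H2_mem_tripleSet.mpr (Finset.mem_range.mp hk)) ω]
        rfl
      rw [hleq] at base
      calc ∫⁻ ω, ∏ k ∈ Finset.range (n + 1), Ψ (t k ω) ∂P
          = ∫⁻ ω, ((fun ω => ∏ k ∈ Finset.range n, Ψ (t k ω)) * fun ω => Ψ (t n ω)) ω ∂P := by
            simp_rw [Pi.mul_apply, Finset.prod_range_succ]
        _ = (∫⁻ ω, ∏ k ∈ Finset.range n, Ψ (t k ω) ∂P) * ∫⁻ ω, Ψ (t n ω) ∂P :=
            lintegral_mul_eq_lintegral_mul_lintegral_of_indepFun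
              (Finset.measurable_prod _ fun k _ => hΨm.comp (htm k)) (hΨm.comp (htm n)) base
        _ = ENNReal.ofReal Ival ^ (n + 1) := by rw [ih, hJ n, pow_succ]
  -- a.e. nonnegativity of the fading variables
  have hexp0 : expMeasure 1 (Set.Iio 0) = 0 := by
    rw [expMeasure, gammaMeasure, withDensity_apply _ measurableSet_Iio]
    exact lintegral_gammaPDF_of_nonpos le_rfl
  have haeh : ∀ (h : ℕ → Ω → ℝ), (∀ k, Measurable (h k)) →
      (∀ k, Measure.map (h k) P = expMeasure 1) → ∀ᵐ ω ∂P, ∀ k, 0 ≤ h k ω := by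
    intro h hm hl
    rw [MeasureTheory.ae_all_iff]
    intro k
    have h0 : P (h k ⁻¹' Set.Iio 0) = 0 := by
      rw [← Measure.map_apply (hm k) measurableSet_Iio, hl k, hexp0]
    rw [ae_iff]
    have hseq : {ω | ¬ (0:ℝ) ≤ h k ω} = h k ⁻¹' Set.Iio 0 := by
      ext ω; simp [not_le]
    rw [hseq]; exact h0
  have hae := (haeh h₁ hh₁ hh₁law).and (haeh h₂ hh₂ hh₂law)
  -- the probability of the events A n
  have hPA : ∀ n, P (A n) = ENNReal.ofReal Ival ^ n := by
    intro n
    have hU : Measurable fun ω => (S₁ n ω, S₂ n ω) := (hS₁m n).prodMk (hS₂m n)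
    have hV : Measurable fun ω => (g₁ ω, g₂ ω) := hg₁.prodMk hg₂
    have hgl : Measurable (fun v : (∀ i : (tripleSet n : Finset MixIdx₂), (i : MixIdx₂).type) =>
        ((θ₁ * ∑ k ∈ Finset.range n,
            c₁ (accR (tripleSet n) v (MixIdx₂.X k)) * accR (tripleSet n) v (MixIdx₂.H1 k),
          θ₂ * ∑ k ∈ Finset.range n,
            c₂ (accR (tripleSet n) v (MixIdx₂.X k)) * accR (tripleSet n) v (MixIdx₂.H2 k))
          : ℝ × ℝ)) := by
      refine Measurable.prodMk ?_ ?_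
      · refine Measurable.const_mul ?_ θ₁
        refine Finset.measurable_sum _ fun k _ => ?_
        exact (hc₁.comp (measurable_accR _ _)).mul (measurable_accR _ _)
      · refine Measurable.const_mul ?_ θ₂
        refine Finset.measurable_sum _ fun k _ => ?_
        exact (hc₂.comp (measurable_accR _ _)).mul (measurable_accR _ _)
    have hgr : Measurable (fun v : (∀ i : (gSet : Finset MixIdx₂), (i : MixIdx₂).type) =>
        ((v ⟨MixIdx₂.G1, by simp [gSet]⟩ : ℝ), (v ⟨MixIdx₂.G2, by simp [gSet]⟩ : ℝ))) :=
      (measurable_pi_apply _).prodMk (measurable_pi_apply _)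
    have base := (hindep.indepFun_finset (tripleSet n) gSet (disj_g n) hFm).comp hgl hgr
    have hleq : ((fun v : (∀ i : (tripleSet n : Finset MixIdx₂), (i : MixIdx₂).type) =>
        ((θ₁ * ∑ k ∈ Finset.range n,
            c₁ (accR (tripleSet n) v (MixIdx₂.X k)) * accR (tripleSet n) v (MixIdx₂.H1 k),
          θ₂ * ∑ k ∈ Finset.range n,
            c₂ (accR (tripleSet n) v (MixIdx₂.X k)) * accR (tripleSet n) v (MixIdx₂.H2 k))
          : ℝ × ℝ)) ∘
        (fun ω (i : (tripleSet n : Finset MixIdx₂)) => mixFam₂ N X h₁ h₂ g₁ g₂ i ω))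
        = fun ω => (S₁ n ω, S₂ n ω) := by
      funext ω
      simp only [Function.comp_apply]
      rw [Prod.mk.injEq]
      constructor
      · show _ = θ₁ * ∑ k ∈ Finset.range n, c₁ (X k ω) * h₁ k ω
        congr 1
        refine Finset.sum_congr rfl fun k hk => ?_
        rw [accR_X _ _ (X_mem_tripleSet.mpr (Finset.mem_range.mp hk)) ω,
          accR_H1 _ _ (H1_mem_tripleSet.mpr (Finset.mem_range.mp hk)) ω]
        rfl
      · show _ = θ₂ * ∑ k ∈ Finset.range n, c₂ (X k ω) * h₂ k ω
        congr 1
        refine Finset.sum_congr rfl fun k hk => ?_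
        rw [accR_X _ _ (X_mem_tripleSet.mpr (Finset.mem_range.mp hk)) ω,
          accR_H2 _ _ (H2_mem_tripleSet.mpr (Finset.mem_range.mp hk)) ω]
        rfl
    rw [hleq] at base
    have hC : MeasurableSet {p : (ℝ × ℝ) × ℝ × ℝ | p.1.1 ≤ p.2.1 ∧ p.1.2 ≤ p.2.2} :=
      (measurableSet_le (measurable_fst.comp measurable_fst)
          (measurable_fst.comp measurable_snd)).inter
        (measurableSet_le (measurable_snd.comp measurable_fst)
          (measurable_snd.comp measurable_snd))
    have hmapV : Measure.map (fun ω => (g₁ ω, g₂ ω)) P = (expMeasure 1).prod (expMeasure 1) := by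
      have hgg : IndepFun g₁ g₂ P :=
        hindep.indepFun (i := MixIdx₂.G1) (j := MixIdx₂.G2) (by simp)
      rw [(indepFun_iff_map_prod_eq_prod_map_map hg₁.aemeasurable hg₂.aemeasurable).mp hgg,
        hg₁law, hg₂law]
    have hAeq : A n = (fun ω => ((S₁ n ω, S₂ n ω), (g₁ ω, g₂ ω))) ⁻¹'
        {p : (ℝ × ℝ) × ℝ × ℝ | p.1.1 ≤ p.2.1 ∧ p.1.2 ≤ p.2.2} := rfl
    calc P (A n)
        = Measure.map (fun ω => ((S₁ n ω, S₂ n ω), (g₁ ω, g₂ ω))) P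
            {p : (ℝ × ℝ) × ℝ × ℝ | p.1.1 ≤ p.2.1 ∧ p.1.2 ≤ p.2.2} := by
          rw [Measure.map_apply (hU.prodMk hV) hC, ← hAeq]
      _ = ((Measure.map (fun ω => (S₁ n ω, S₂ n ω)) P).prod
            (Measure.map (fun ω => (g₁ ω, g₂ ω)) P))
            {p : (ℝ × ℝ) × ℝ × ℝ | p.1.1 ≤ p.2.1 ∧ p.1.2 ≤ p.2.2} := by
          rw [(indepFun_iff_map_prod_eq_prod_map_map hU.aemeasurable hV.aemeasurable).mp base]
      _ = ∫⁻ q : ℝ × ℝ, ((expMeasure 1).prod (expMeasure 1))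
            (Prod.mk q ⁻¹' {p : (ℝ × ℝ) × ℝ × ℝ | p.1.1 ≤ p.2.1 ∧ p.1.2 ≤ p.2.2})
            ∂(Measure.map (fun ω => (S₁ n ω, S₂ n ω)) P) := by
          rw [hmapV, Measure.prod_apply hC]
      _ = ∫⁻ q : ℝ × ℝ, ENNReal.ofReal (Real.exp (-(max q.1 0))) *
            ENNReal.ofReal (Real.exp (-(max q.2 0)))
            ∂(Measure.map (fun ω => (S₁ n ω, S₂ n ω)) P) := by
          refine lintegral_congr fun q => ?_
          have hq : Prod.mk q ⁻¹' {p : (ℝ × ℝ) × ℝ × ℝ | p.1.1 ≤ p.2.1 ∧ p.1.2 ≤ p.2.2}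
              = {y : ℝ | q.1 ≤ y} ×ˢ {y : ℝ | q.2 ≤ y} := rfl
          rw [hq, Measure.prod_prod, aux_expMeasure_Ici, aux_expMeasure_Ici]
      _ = ∫⁻ ω, ENNReal.ofReal (Real.exp (-(max (S₁ n ω) 0))) *
            ENNReal.ofReal (Real.exp (-(max (S₂ n ω) 0))) ∂P :=
          lintegral_map (by fun_prop) hU
      _ = ∫⁻ ω, ∏ k ∈ Finset.range n, Ψ (t k ω) ∂P := by
          refine lintegral_congr_ae ?_
          filter_upwards [hae] with ω hω
          obtain ⟨hω₁, hω₂⟩ := hω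
          have hS1 : 0 ≤ S₁ n ω := mul_nonneg hθ₁
            (Finset.sum_nonneg fun k _ => mul_nonneg (hc₁0 _) (hω₁ k))
          have hS2 : 0 ≤ S₂ n ω := mul_nonneg hθ₂
            (Finset.sum_nonneg fun k _ => mul_nonneg (hc₂0 _) (hω₂ k))
          have hsum1 : -(S₁ n ω) = ∑ k ∈ Finset.range n,
              -(θ₁ * c₁ (X k ω) * max (h₁ k ω) 0) := by
            rw [Finset.sum_neg_distrib, neg_inj]
            show θ₁ * ∑ k ∈ Finset.range n, c₁ (X k ω) * h₁ k ω = _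
            rw [Finset.mul_sum]
            exact Finset.sum_congr rfl fun k _ => by rw [max_eq_left (hω₁ k)]; ring
          have hsum2 : -(S₂ n ω) = ∑ k ∈ Finset.range n,
              -(θ₂ * c₂ (X k ω) * max (h₂ k ω) 0) := by
            rw [Finset.sum_neg_distrib, neg_inj]
            show θ₂ * ∑ k ∈ Finset.range n, c₂ (X k ω) * h₂ k ω = _
            rw [Finset.mul_sum]
            exact Finset.sum_congr rfl fun k _ => by rw [max_eq_left (hω₂ k)]; ring
          rw [max_eq_left hS1, max_eq_left hS2, hsum1, hsum2, Real.exp_sum, Real.exp_sum,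
            ENNReal.ofReal_prod_of_nonneg (fun k _ => (Real.exp_pos _).le),
            ENNReal.ofReal_prod_of_nonneg (fun k _ => (Real.exp_pos _).le),
            ← Finset.prod_mul_distrib]
          rfl
      _ = ENNReal.ofReal Ival ^ n := hQ n
  -- independence of N from the event A n
  have hBstep : ∀ n, P (N ⁻¹' {n} ∩ A n) = P (N ⁻¹' {n}) * P (A n) := by
    intro n
    have hglN : Measurable (fun v : (∀ i : (({MixIdx₂.N} : Finset MixIdx₂)),
        (i : MixIdx₂).type) => (v ⟨MixIdx₂.N, by simp⟩ : ℕ)) := measurable_pi_apply _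
    have base := (hindep.indepFun_finset {MixIdx₂.N} (bigSet n) (disj_N n) hFm).comp
      hglN measurable_id
    have hNeq : ((fun v : (∀ i : (({MixIdx₂.N} : Finset MixIdx₂)), (i : MixIdx₂).type) =>
        (v ⟨MixIdx₂.N, by simp⟩ : ℕ)) ∘
        (fun ω (i : (({MixIdx₂.N} : Finset MixIdx₂))) => mixFam₂ N X h₁ h₂ g₁ g₂ i ω)) = N := rfl
    have hideq : (id ∘ (fun ω (i : (bigSet n : Finset MixIdx₂)) =>
        mixFam₂ N X h₁ h₂ g₁ g₂ i ω)) =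
        fun ω (i : (bigSet n : Finset MixIdx₂)) => mixFam₂ N X h₁ h₂ g₁ g₂ i ω := rfl
    rw [hNeq, hideq] at base
    set Bset : Set (∀ i : (bigSet n : Finset MixIdx₂), (i : MixIdx₂).type) :=
      {v | θ₁ * ∑ k ∈ Finset.range n,
            c₁ (accR (bigSet n) v (MixIdx₂.X k)) * accR (bigSet n) v (MixIdx₂.H1 k)
          ≤ accR (bigSet n) v MixIdx₂.G1 ∧
        θ₂ * ∑ k ∈ Finset.range n,
            c₂ (accR (bigSet n) v (MixIdx₂.X k)) * accR (bigSet n) v (MixIdx₂.H2 k)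
          ≤ accR (bigSet n) v MixIdx₂.G2} with hBdef
    have hBm : MeasurableSet Bset := by
      refine MeasurableSet.inter ?_ ?_
      · refine measurableSet_le ?_ (measurable_accR _ _)
        refine Measurable.const_mul ?_ θ₁
        refine Finset.measurable_sum _ fun k _ => ?_
        exact (hc₁.comp (measurable_accR _ _)).mul (measurable_accR _ _)
      · refine measurableSet_le ?_ (measurable_accR _ _)
        refine Measurable.const_mul ?_ θ₂
        refine Finset.measurable_sum _ fun k _ => ?_
        exact (hc₂.comp (measurable_accR _ _)).mul (measurable_accR _ _)
    have hpre : (fun ω (i : (bigSet n : Finset MixIdx₂)) =>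
        mixFam₂ N X h₁ h₂ g₁ g₂ i ω) ⁻¹' Bset = A n := by
      ext ω
      simp only [Set.mem_preimage, hBdef, Set.mem_setOf_eq]
      have e₁ : ∑ k ∈ Finset.range n,
          c₁ (accR (bigSet n) (fun i : (bigSet n : Finset MixIdx₂) =>
              mixFam₂ N X h₁ h₂ g₁ g₂ i ω) (MixIdx₂.X k)) *
            accR (bigSet n) (fun i : (bigSet n : Finset MixIdx₂) =>
              mixFam₂ N X h₁ h₂ g₁ g₂ i ω) (MixIdx₂.H1 k)
          = ∑ k ∈ Finset.range n, c₁ (X k ω) * h₁ k ω := by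
        refine Finset.sum_congr rfl fun k hk => ?_
        rw [accR_X _ _ (X_mem_bigSet.mpr (Finset.mem_range.mp hk)) ω,
          accR_H1 _ _ (H1_mem_bigSet.mpr (Finset.mem_range.mp hk)) ω]
        rfl
      have e₂ : ∑ k ∈ Finset.range n,
          c₂ (accR (bigSet n) (fun i : (bigSet n : Finset MixIdx₂) =>
              mixFam₂ N X h₁ h₂ g₁ g₂ i ω) (MixIdx₂.X k)) *
            accR (bigSet n) (fun i : (bigSet n : Finset MixIdx₂) =>
              mixFam₂ N X h₁ h₂ g₁ g₂ i ω) (MixIdx₂.H2 k)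
          = ∑ k ∈ Finset.range n, c₂ (X k ω) * h₂ k ω := by
        refine Finset.sum_congr rfl fun k hk => ?_
        rw [accR_X _ _ (X_mem_bigSet.mpr (Finset.mem_range.mp hk)) ω,
          accR_H2 _ _ (H2_mem_bigSet.mpr (Finset.mem_range.mp hk)) ω]
        rfl
      rw [e₁, e₂, accR_G1 _ _ (G1_mem_bigSet (n := n)) ω,
        accR_G2 _ _ (G2_mem_bigSet (n := n)) ω]
      exact Iff.rfl
    have hM := (indepFun_iff_measure_inter_preimage_eq_mul.mp base) {n} Bset
      (measurableSet_singleton n) hBm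
    rw [hpre] at hM
    exact hM
  -- Poisson law of N
  have hPN : ∀ n, P (N ⁻¹' {n}) = ENNReal.ofReal (poissonPMFReal μ.toNNReal n) := by
    intro n
    rw [← Measure.map_apply hN (measurableSet_singleton n), hNlaw, poissonMeasure,
      Measure.sum_smul_dirac_singleton]
    rfl
  -- decomposition of the event according to the value of N
  have hsetdecomp : {ω | θ₁ * ∑ k ∈ Finset.range (N ω), c₁ (X k ω) * h₁ k ω ≤ g₁ ω ∧
      θ₂ * ∑ k ∈ Finset.range (N ω), c₂ (X k ω) * h₂ k ω ≤ g₂ ω}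
      = ⋃ n, (N ⁻¹' {n} ∩ A n) := by
    ext ω
    simp only [Set.mem_setOf_eq, Set.mem_iUnion, Set.mem_inter_iff, Set.mem_preimage,
      Set.mem_singleton_iff]
    constructor
    · intro hc
      exact ⟨N ω, rfl, hc⟩
    · rintro ⟨n, hn, hA⟩
      subst hn
      exact hA
  have hdisjU : Pairwise (Function.onFun Disjoint fun n => N ⁻¹' {n} ∩ A n) := by
    intro m n hmn
    refine Set.disjoint_left.mpr fun ω hm hn' => hmn ?_
    exact hm.1.symm.trans hn'.1
  rw [hsetdecomp, measure_iUnion hdisjU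
    (fun n => (hN (measurableSet_singleton n)).inter (hAm n))]
  -- compute the series
  have hterm : ∀ n, poissonPMFReal μ.toNNReal n * Ival ^ n
      = Real.exp (-μ) * ((μ * Ival) ^ n / n !) := by
    intro n
    rw [poissonPMFReal, Real.coe_toNNReal μ hμ, mul_pow]
    ring
  have h1 : ∀ n, P (N ⁻¹' {n} ∩ A n)
      = ENNReal.ofReal (Real.exp (-μ) * ((μ * Ival) ^ n / n !)) := by
    intro n
    rw [hBstep n, hPA n, hPN n, ← ENNReal.ofReal_pow hI0,
      ← ENNReal.ofReal_mul poissonPMFReal_nonneg, hterm n]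
  have hnn : ∀ n : ℕ, 0 ≤ Real.exp (-μ) * ((μ * Ival) ^ n / n !) := fun n =>
    mul_nonneg (Real.exp_pos _).le (div_nonneg (pow_nonneg (mul_nonneg hμ hI0) n)
      (Nat.cast_nonneg _))
  have hsummable : Summable fun n : ℕ => Real.exp (-μ) * ((μ * Ival) ^ n / n !) :=
    (Real.summable_pow_div_factorial (μ * Ival)).mul_left _
  rw [tsum_congr h1, ← ENNReal.ofReal_tsum_of_nonneg hnn hsummable, tsum_mul_left]
  have htsum : ∑' n : ℕ, (μ * Ival) ^ n / (n ! : ℝ) = Real.exp (μ * Ival) := by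
    rw [Real.exp_eq_exp_ℝ]
    exact (NormedSpace.expSeries_div_hasSum_exp (μ * Ival)).tsum_eq
  rw [htsum]
  have hfint : Integrable (fun x => 1 / ((1 + θ₁ * c₁ x) * (1 + θ₂ * c₂ x))) ν :=
    aux_f_int θ₁ θ₂ hθ₁ hθ₂ hc₁ hc₂ hc₁0 hc₂0 ν
  have hsub : ∫ x, (1 - 1 / ((1 + θ₁ * c₁ x) * (1 + θ₂ * c₂ x))) ∂ν = 1 - Ival := by
    rw [integral_sub (integrable_const 1) hfint, integral_const, probReal_univ, hIdef]
    simp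
  rw [hsub, ← Real.exp_add]
  congr 1
  ring
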